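/- The Hausdorff distance between interval-decomposable modules over ℝ² is not Lipschitz-stable with respect to the interleaving distance: for every real constant c > 0 there exist interval-decomposable ℝ²-modules M and N (with M a direct sum of two interval modules and N a single interval module) such that d_I(M, N) ≤ 1 and d_H(M, N) ≥ c. -/

import Mathlib

open CategoryTheory
open scoped Classical ENNReal NNReal

set_option linter.unusedSectionVars false
set_option linter.unusedVariables false

/-! ## Posets, intervals, flows -/

variable {P : Type} [PartialOrder P]

/-- A subset of a poset is poset-convex if it contains every point between two of its points. -/
def PosetConvex (I : Set P) : Prop :=
  ∀ ⦃p q r : P⦄, p ∈ I → q ∈ I → p ≤ r → r ≤ q → r ∈ I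

/-- A subset of a poset is poset-connected if any two of its points are joined by a
zigzag path inside the subset. -/
def PosetConnected (I : Set P) : Prop :=
  ∀ p ∈ I, ∀ q ∈ I,
    Relation.ReflTransGen (fun a b => b ∈ I ∧ (a ≤ b ∨ b ≤ a)) p q

/-- An interval in a poset is a poset-convex and poset-connected subset. -/
def IsInterval (I : Set P) : Prop := PosetConvex I ∧ PosetConnected I

/-- `Q` is a poset-connected component of `U`: a poset-connected subset of `U`, maximal with
respect to inclusion among poset-connected subsets of `U`. -/
def IsPosetComponent (U Q : Set P) : Prop :=
  Q ⊆ U ∧ PosetConnected Q ∧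
    ∀ Q' : Set P, Q' ⊆ U → PosetConnected Q' → Q ⊆ Q' → Q' = Q

/-- A subset `Q` of `I ∩ J` is `(I,J)`-valid. -/
def IsValid (I J Q : Set P) : Prop :=
  ∀ p ∈ Q, (∀ q ∈ I, q ≤ p → q ∈ J) ∧ (∀ r ∈ J, p ≤ r → r ∈ I)

/-- An `ℝ`-flow on a poset. -/
structure RFlow (P : Type) [PartialOrder P] where
  Ω : ℝ → P → P
  mono : ∀ t : ℝ, Monotone (Ω t)
  mono_param : ∀ {t s : ℝ}, t ≤ s → ∀ p : P, Ω t p ≤ Ω s p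
  add : ∀ t s : ℝ, ∀ p : P, Ω (t + s) p = Ω t (Ω s p)
  zero : ∀ p : P, Ω 0 p = p

/-- The `t`-shift `I(t)` of a subset of a poset with an `ℝ`-flow. -/
def RFlow.shiftSet (Φ : RFlow P) (I : Set P) (t : ℝ) : Set P := {p : P | Φ.Ω t p ∈ I}

lemma RFlow.self_le (Φ : RFlow P) {t : ℝ} (ht : 0 ≤ t) (p : P) : p ≤ Φ.Ω t p := by
  have h := Φ.mono_param ht p
  rwa [Φ.zero] at h

lemma RFlow.self_le_twice (Φ : RFlow P) {t : ℝ} (ht : 0 ≤ t) (p : P) :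
    p ≤ Φ.Ω t (Φ.Ω t p) :=
  (Φ.self_le ht p).trans (Φ.self_le ht _)

lemma RFlow.omega_neg_omega (Φ : RFlow P) (t : ℝ) (p : P) : Φ.Ω (-t) (Φ.Ω t p) = p := by
  have h := Φ.add (-t) t p
  rw [neg_add_cancel, Φ.zero] at h
  exact h.symm

lemma RFlow.omega_omega_neg (Φ : RFlow P) (t : ℝ) (p : P) : Φ.Ω t (Φ.Ω (-t) p) = p := by
  have h := Φ.add t (-t) p
  rw [add_neg_cancel, Φ.zero] at h
  exact h.symm

lemma RFlow.posetConvex_shiftSet (Φ : RFlow P) {I : Set P} (hI : PosetConvex I) (t : ℝ) :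
    PosetConvex (Φ.shiftSet I t) := by
  intro p q r hp hq hpr hrq
  exact hI hp hq (Φ.mono t hpr) (Φ.mono t hrq)

lemma RFlow.posetConnected_shiftSet (Φ : RFlow P) {I : Set P} (hI : PosetConnected I) (t : ℝ) :
    PosetConnected (Φ.shiftSet I t) := by
  intro p hp q hq
  have h := hI _ hp _ hq
  have h2 := Relation.ReflTransGen.lift
    (p := fun a b : P => b ∈ Φ.shiftSet I t ∧ (a ≤ b ∨ b ≤ a)) (fun x : P => Φ.Ω (-t) x)
    (fun a b (hab : b ∈ I ∧ (a ≤ b ∨ b ≤ a)) => ⟨show Φ.Ω t (Φ.Ω (-t) b) ∈ I by rw [Φ.omega_omega_neg]; exact hab.1,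
      hab.2.imp (fun h' => Φ.mono (-t) h') (fun h' => Φ.mono (-t) h')⟩) _ _ h
  simpa only [Function.onFun, Φ.omega_neg_omega] using h2

lemma RFlow.isInterval_shiftSet (Φ : RFlow P) {I : Set P} (hI : IsInterval I) (t : ℝ) :
    IsInterval (Φ.shiftSet I t) :=
  ⟨Φ.posetConvex_shiftSet hI.1 t, Φ.posetConnected_shiftSet hI.2 t⟩

lemma RFlow.shiftSet_nonempty (Φ : RFlow P) {I : Set P} (hI : I.Nonempty) (t : ℝ) :
    (Φ.shiftSet I t).Nonempty := by
  obtain ⟨x, hx⟩ := hI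
  exact ⟨Φ.Ω (-t) x, show Φ.Ω t (Φ.Ω (-t) x) ∈ I by rw [Φ.omega_omega_neg]; exact hx⟩

/-! ## Characteristic (interval) persistence modules -/

variable (K : Type) [Field K]

/-- The pointwise value of the characteristic module of `I`, as a submodule of `K`. -/
noncomputable def charSub (I : Set P) (p : P) : Submodule K K :=
  if p ∈ I then ⊤ else ⊥

lemma charSub_eq_top {I : Set P} {p : P} (hp : p ∈ I) : charSub K I p = ⊤ := if_pos hp

lemma charSub_eq_bot {I : Set P} {p : P} (hp : p ∉ I) : charSub K I p = ⊥ := if_neg hp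

lemma charElt_eq_zero {I : Set P} {p : P} (hp : p ∉ I) (x : ↥(charSub K I p)) : x = 0 := by
  exact Subtype.ext ((Submodule.eq_bot_iff _).mp (charSub_eq_bot K hp) (x : K) x.2)

/-- The structure maps of the characteristic module of `I`. -/
noncomputable def charMap (I : Set P) (p q : P) :
    ↥(charSub K I p) →ₗ[K] ↥(charSub K I q) :=
  if h : p ∈ I ∧ q ∈ I then
    { toFun := fun x => ⟨(x : K), by rw [charSub_eq_top K h.2]; exact Submodule.mem_top⟩
      map_add' := fun x y => rfl
      map_smul' := fun c x => rfl }
  else 0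

lemma charMap_id (I : Set P) (p : P) : charMap K I p p = LinearMap.id := by
  by_cases hp : p ∈ I
  · simp only [charMap, dif_pos (And.intro hp hp)]
    rfl
  · ext x
    rw [charElt_eq_zero K hp x]
    simp

lemma charMap_comp {I : Set P} (hI : PosetConvex I) {p q r : P} (hpq : p ≤ q) (hqr : q ≤ r) :
    (charMap K I q r).comp (charMap K I p q) = charMap K I p r := by
  by_cases hp : p ∈ I
  · by_cases hr : r ∈ I
    · have hq : q ∈ I := hI hp hr hpq hqr
      ext x
      simp only [charMap, dif_pos (And.intro hp hq), dif_pos (And.intro hq hr),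
        dif_pos (And.intro hp hr), LinearMap.comp_apply, LinearMap.coe_mk, AddHom.coe_mk]
    · ext x
      exact congrArg Subtype.val
        ((charElt_eq_zero K hr ((charMap K I q r).comp (charMap K I p q) x)).trans
          (charElt_eq_zero K hr (charMap K I p r x)).symm)
  · ext x
    rw [charElt_eq_zero K hp x]
    simp

/-- The characteristic persistence module `C(I)` of a poset-convex subset `I`. -/
noncomputable def charMod (I : Set P) (hI : PosetConvex I) : P ⥤ ModuleCat K where
  obj p := ModuleCat.of K ↥(charSub K I p)
  map {p q} h := ModuleCat.ofHom (charMap K I p q)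
  map_id p := ModuleCat.hom_ext (charMap_id K I p)
  map_comp {p q r} h1 h2 := ModuleCat.hom_ext (charMap_comp K hI (leOfHom h1) (leOfHom h2)).symm

/-- The zero persistence module, realized as the characteristic module of the empty interval. -/
noncomputable def zeroPMod : P ⥤ ModuleCat K :=
  charMod K (∅ : Set P) (fun _ _ _ hp _ _ _ => absurd hp (Set.notMem_empty _))

/-! ## Barcodes and interval-decomposable modules -/

/-- A barcode over a poset: a multiset of nonempty intervals, encoded as an indexed family. -/
structure Barcode (P : Type) [PartialOrder P] where
  ι : Type
  B : ι → Set P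
  interval : ∀ a : ι, IsInterval (B a)
  nonempty : ∀ a : ι, (B a).Nonempty

/-- The interval-decomposable module `⊕_{a} C(B a)` associated to a barcode. -/
noncomputable def bcMod (D : Barcode P) : P ⥤ ModuleCat K where
  obj p := ModuleCat.of K (Π₀ a : D.ι, ↥(charSub K (D.B a) p))
  map {p q} h := ModuleCat.ofHom (DFinsupp.mapRange.linearMap (fun a => charMap K (D.B a) p q))
  map_id p := by
    apply ModuleCat.hom_ext
    have h : (fun a : D.ι => charMap K (D.B a) p p)
        = fun a : D.ι => (LinearMap.id : ↥(charSub K (D.B a) p) →ₗ[K] ↥(charSub K (D.B a) p)) := by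
      funext a; exact charMap_id K (D.B a) p
    show DFinsupp.mapRange.linearMap (fun a => charMap K (D.B a) p p) = LinearMap.id
    rw [h, DFinsupp.mapRange.linearMap_id]
  map_comp {p q r} h1 h2 := by
    apply ModuleCat.hom_ext
    have h : (fun a : D.ι => charMap K (D.B a) p r)
        = fun a : D.ι => (charMap K (D.B a) q r).comp (charMap K (D.B a) p q) := by
      funext a
      exact (charMap_comp K (D.interval a).1 (leOfHom h1) (leOfHom h2)).symm
    show DFinsupp.mapRange.linearMap (fun a => charMap K (D.B a) p r) = _
    rw [h, DFinsupp.mapRange.linearMap_comp]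
    rfl

/-- `M` is interval-decomposable with barcode `D`. -/
def IsDecompositionOf (D : Barcode P) (M : P ⥤ ModuleCat K) : Prop :=
  Nonempty (M ≅ bcMod K D)

/-- The shift of a barcode along a flow. -/
noncomputable def Barcode.shift (D : Barcode P) (Φ : RFlow P) (t : ℝ) : Barcode P where
  ι := D.ι
  B a := Φ.shiftSet (D.B a) t
  interval a := Φ.isInterval_shiftSet (D.interval a) t
  nonempty a := Φ.shiftSet_nonempty (D.nonempty a) t

/-! ## Shifts of modules, interleavings, distances -/

/-- The shift `M(t)` of a persistence module along a flow. -/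
noncomputable def Pshift (Φ : RFlow P) (t : ℝ) (M : P ⥤ ModuleCat K) : P ⥤ ModuleCat K :=
  (Φ.mono t).functor ⋙ M

/-- The ordered pair `(M, N)` is left `ε`-interleaved. -/
noncomputable def LeftInterleaved (Φ : RFlow P) {ε : ℝ} (hε : 0 ≤ ε)
    (M N : P ⥤ ModuleCat K) : Prop :=
  ∃ (f : M ⟶ Pshift K Φ ε N) (g : N ⟶ Pshift K Φ ε M),
    ∀ p : P, f.app p ≫ g.app (Φ.Ω ε p) = M.map (homOfLE (Φ.self_le_twice hε p))

/-- `M` and `N` are `ε`-interleaved. -/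
noncomputable def Interleaved (Φ : RFlow P) {ε : ℝ} (hε : 0 ≤ ε)
    (M N : P ⥤ ModuleCat K) : Prop :=
  ∃ (f : M ⟶ Pshift K Φ ε N) (g : N ⟶ Pshift K Φ ε M),
    (∀ p : P, f.app p ≫ g.app (Φ.Ω ε p) = M.map (homOfLE (Φ.self_le_twice hε p))) ∧
    (∀ p : P, g.app p ≫ f.app (Φ.Ω ε p) = N.map (homOfLE (Φ.self_le_twice hε p)))

/-- The interleaving distance between two persistence modules. -/
noncomputable def dI (Φ : RFlow P) (M N : P ⥤ ModuleCat K) : ℝ≥0∞ :=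
  ⨅ (ε : NNReal) (_ : Interleaved K Φ ε.coe_nonneg M N), (ε : ℝ≥0∞)

/-- An interval `I` is `t`-trivial if the transition morphism `C(I) → C(I(t))` vanishes. -/
noncomputable def IsTrivialIv (Φ : RFlow P) {t : ℝ} (ht : 0 ≤ t)
    (I : Set P) (hI : PosetConvex I) : Prop :=
  ∀ p : P, (charMod K I hI).map (homOfLE (Φ.self_le ht p)) = 0

/-- An `ε`-correspondence between two barcodes. -/
noncomputable def IsCorrespondence (Φ : RFlow P) {ε : ℝ} (hε : 0 ≤ ε)
    (DM DN : Barcode P) (σ : Set (DM.ι × DN.ι)) : Prop :=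
  (∀ ab ∈ σ, Interleaved K Φ hε
      (charMod K (DM.B ab.1) (DM.interval ab.1).1) (charMod K (DN.B ab.2) (DN.interval ab.2).1)) ∧
  (∀ a : DM.ι, (∀ b : DN.ι, (a, b) ∉ σ) →
      Interleaved K Φ hε (charMod K (DM.B a) (DM.interval a).1) (zeroPMod K)) ∧
  (∀ b : DN.ι, (∀ a : DM.ι, (a, b) ∉ σ) →
      Interleaved K Φ hε (zeroPMod K) (charMod K (DN.B b) (DN.interval b).1))

/-- An `ε`-matching between two barcodes. -/
noncomputable def IsMatching (Φ : RFlow P) {ε : ℝ} (hε : 0 ≤ ε)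
    (DM DN : Barcode P) (σ : Set (DM.ι × DN.ι)) : Prop :=
  IsCorrespondence K Φ hε DM DN σ ∧
  (∀ a b b', (a, b) ∈ σ → (a, b') ∈ σ → b = b') ∧
  (∀ a a' b, (a, b) ∈ σ → (a', b) ∈ σ → a = a')

/-- The Hausdorff distance between (modules with) barcodes `DM`, `DN`. -/
noncomputable def dH (Φ : RFlow P) (DM DN : Barcode P) : ℝ≥0∞ :=
  ⨅ (ε : NNReal) (_ : ∃ σ : Set (DM.ι × DN.ι), IsCorrespondence K Φ ε.coe_nonneg DM DN σ),
    (ε : ℝ≥0∞)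

/-- The bottleneck distance between (modules with) barcodes `DM`, `DN`. -/
noncomputable def dB (Φ : RFlow P) (DM DN : Barcode P) : ℝ≥0∞ :=
  ⨅ (ε : NNReal) (_ : ∃ σ : Set (DM.ι × DN.ι), IsMatching K Φ ε.coe_nonneg DM DN σ),
    (ε : ℝ≥0∞)


/-- The standard flow on `ℝⁿ`, by diagonal shifts. -/
noncomputable def stdFlow (n : ℕ) : RFlow (Fin n → ℝ) where
  Ω t x := x + t • (1 : Fin n → ℝ)
  mono t := fun x y h => add_le_add h le_rfl
  mono_param {t s} hts p := by
    intro i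
    simp only [Pi.add_apply, Pi.smul_apply, Pi.one_apply, smul_eq_mul, mul_one]
    linarith
  add t s p := by
    funext i
    simp only [Pi.add_apply, Pi.smul_apply, Pi.one_apply, smul_eq_mul, mul_one]
    ring
  zero p := by
    funext i
    simp

/-! ## Auxiliary machinery: cross-characteristic maps -/

section CMap

variable {P : Type} [PartialOrder P] (K : Type) [Field K]

/-- A map between characteristic stalks of possibly different sets. -/
noncomputable def cmap (I I' : Set P) (p q : P) :
    ↥(charSub K I p) →ₗ[K] ↥(charSub K I' q) :=
  if h : p ∈ I ∧ q ∈ I' then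
    { toFun := fun x => ⟨(x : K), by rw [charSub_eq_top K h.2]; exact Submodule.mem_top⟩
      map_add' := fun x y => rfl
      map_smul' := fun c x => rfl }
  else 0

lemma charMap_eq_cmap (I : Set P) (p q : P) : charMap K I p q = cmap K I I p q := rfl

lemma cmap_val (I I' : Set P) (p q : P) (x : ↥(charSub K I p)) :
    ((cmap K I I' p q x : ↥(charSub K I' q)) : K) = if p ∈ I ∧ q ∈ I' then (x : K) else 0 := by
  by_cases h : p ∈ I ∧ q ∈ I'
  · rw [cmap, dif_pos h, if_pos h]; rfl
  · rw [cmap, dif_neg h, if_neg h]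
    simp

lemma cmap_cmap_val (I₁ I₂ I₃ : Set P) (p q r : P) (x : ↥(charSub K I₁ p)) :
    ((cmap K I₂ I₃ q r (cmap K I₁ I₂ p q x) : ↥(charSub K I₃ r)) : K)
      = if p ∈ I₁ ∧ q ∈ I₂ ∧ r ∈ I₃ then (x : K) else 0 := by
  rw [cmap_val, cmap_val]
  split_ifs <;> first | rfl | tauto

/-- Master lemma: two composite routes agree. -/
lemma comp_eq_comp (I₁ I₂ I₂' I₃ : Set P) (p q q' r : P)
    (h : p ∈ I₁ → r ∈ I₃ → (q ∈ I₂ ↔ q' ∈ I₂')) :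
    (cmap K I₂ I₃ q r).comp (cmap K I₁ I₂ p q)
      = (cmap K I₂' I₃ q' r).comp (cmap K I₁ I₂' p q') := by
  apply LinearMap.ext; intro x
  apply Subtype.ext
  rw [LinearMap.comp_apply, LinearMap.comp_apply, cmap_cmap_val, cmap_cmap_val]
  apply if_congr _ rfl rfl
  constructor
  · rintro ⟨h1, h2, h3⟩; exact ⟨h1, (h h1 h3).mp h2, h3⟩
  · rintro ⟨h1, h2, h3⟩; exact ⟨h1, (h h1 h3).mpr h2, h3⟩

/-- A composite route collapses to a single map. -/
lemma comp_eq_cmap (I₁ I₂ I₃ : Set P) (p q r : P)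
    (h : p ∈ I₁ → r ∈ I₃ → q ∈ I₂) :
    (cmap K I₂ I₃ q r).comp (cmap K I₁ I₂ p q) = cmap K I₁ I₃ p r := by
  apply LinearMap.ext; intro x
  apply Subtype.ext
  rw [LinearMap.comp_apply, cmap_cmap_val, cmap_val]
  apply if_congr _ rfl rfl
  constructor
  · rintro ⟨h1, h2, h3⟩; exact ⟨h1, h3⟩
  · rintro ⟨h1, h3⟩; exact ⟨h1, h h1 h3, h3⟩

/-- A geometrically impossible composite route vanishes. -/
lemma comp_eq_zero (I₁ I₂ I₃ : Set P) (p q r : P)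
    (h : ¬(p ∈ I₁ ∧ q ∈ I₂ ∧ r ∈ I₃)) :
    (cmap K I₂ I₃ q r).comp (cmap K I₁ I₂ p q) = 0 := by
  apply LinearMap.ext; intro x
  apply Subtype.ext
  rw [LinearMap.comp_apply, cmap_cmap_val, if_neg h]
  simp

/-- Two composite routes through disjoint covering middles sum to the transition map. -/
lemma comp_add_comp (I A B : Set P) (p q r : P)
    (hmem : p ∈ I → r ∈ I → q ∈ A ∪ B)
    (hdis : p ∈ I → ¬(q ∈ A ∧ q ∈ B)) :
    (cmap K A I q r).comp (cmap K I A p q) + (cmap K B I q r).comp (cmap K I B p q)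
      = charMap K I p r := by
  apply LinearMap.ext; intro x
  apply Subtype.ext
  rw [charMap_eq_cmap, LinearMap.add_apply, Submodule.coe_add, LinearMap.comp_apply,
    LinearMap.comp_apply, cmap_cmap_val, cmap_cmap_val, cmap_val]
  by_cases hI : p ∈ I ∧ r ∈ I
  · rcases hmem hI.1 hI.2 with hA | hB
    · rw [if_pos ⟨hI.1, hA, hI.2⟩, if_pos hI, if_neg (fun h => hdis hI.1 ⟨hA, h.2.1⟩), add_zero]
    · rw [if_pos hI, if_neg (fun h => hdis hI.1 ⟨h.2.1, hB⟩), if_pos ⟨hI.1, hB, hI.2⟩, zero_add]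
  · rw [if_neg hI, if_neg (fun h => hI ⟨h.1, h.2.2⟩), if_neg (fun h => hI ⟨h.1, h.2.2⟩), add_zero]

end CMap

/-! ## The concrete geometry: two squares meeting at a corner -/

section Geometry

/-- An axis-parallel closed box in `ℝ²`. -/
def pbox (a b c d : ℝ) : Set (Fin 2 → ℝ) :=
  {p | a ≤ p 0 ∧ p 0 ≤ b ∧ c ≤ p 1 ∧ p 1 ≤ d}

lemma mem_pbox {a b c d : ℝ} {p : Fin 2 → ℝ} :
    p ∈ pbox a b c d ↔ a ≤ p 0 ∧ p 0 ≤ b ∧ c ≤ p 1 ∧ p 1 ≤ d := Iff.rfl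

lemma pbox_convex (a b c d : ℝ) : PosetConvex (pbox a b c d) := by
  intro p q r hp hq hpr hrq
  obtain ⟨a1, a2, a3, a4⟩ := hp
  obtain ⟨b1, b2, b3, b4⟩ := hq
  exact ⟨le_trans a1 (hpr 0), le_trans (hrq 0) b2, le_trans a3 (hpr 1), le_trans (hrq 1) b4⟩

lemma pbox_connected (a b c d : ℝ) : PosetConnected (pbox a b c d) := by
  intro p hp q hq
  obtain ⟨a1, a2, a3, a4⟩ := hp
  obtain ⟨b1, b2, b3, b4⟩ := hq
  set m : Fin 2 → ℝ := ![max (p 0) (q 0), max (p 1) (q 1)] with hm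
  have hmmem : m ∈ pbox a b c d := by
    refine ⟨le_trans a1 (le_max_left _ _), max_le a2 b2, le_trans a3 (le_max_left _ _),
      max_le a4 b4⟩
  have hpm : p ≤ m := by
    intro i
    fin_cases i
    · exact le_max_left _ _
    · exact le_max_left _ _
  have hqm : q ≤ m := by
    intro i
    fin_cases i
    · exact le_max_right _ _
    · exact le_max_right _ _
  exact Relation.ReflTransGen.head ⟨hmmem, Or.inl hpm⟩
    (Relation.ReflTransGen.single ⟨⟨b1, b2, b3, b4⟩, Or.inr hqm⟩)

variable {L : ℝ}

/-- The upper-left square. -/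
def SqA (L : ℝ) : Set (Fin 2 → ℝ) := pbox 0 L 0 L
/-- The lower-right square. -/
def SqB (L : ℝ) : Set (Fin 2 → ℝ) := pbox L (2*L) (-L) 0
/-- Their union: the two squares meet at the corner `(L, 0)`. -/
def SqJ (L : ℝ) : Set (Fin 2 → ℝ) := SqA L ∪ SqB L

lemma mem_SqA {p : Fin 2 → ℝ} : p ∈ SqA L ↔ 0 ≤ p 0 ∧ p 0 ≤ L ∧ 0 ≤ p 1 ∧ p 1 ≤ L := Iff.rfl
lemma mem_SqB {p : Fin 2 → ℝ} :
    p ∈ SqB L ↔ L ≤ p 0 ∧ p 0 ≤ 2*L ∧ -L ≤ p 1 ∧ p 1 ≤ 0 := Iff.rfl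
lemma mem_SqJ {p : Fin 2 → ℝ} : p ∈ SqJ L ↔ p ∈ SqA L ∨ p ∈ SqB L := Iff.rfl

lemma SqJ_convex (hL : 0 < L) : PosetConvex (SqJ L) := by
  intro p q r hp hq hpr hrq
  have hpr0 := hpr 0; have hpr1 := hpr 1; have hrq0 := hrq 0; have hrq1 := hrq 1
  rcases hp with ⟨a1, a2, a3, a4⟩ | ⟨a1, a2, a3, a4⟩ <;>
    rcases hq with ⟨b1, b2, b3, b4⟩ | ⟨b1, b2, b3, b4⟩
  · exact Or.inl ⟨by linarith, by linarith, by linarith, by linarith⟩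
  · by_cases h : r 0 ≤ L
    · exact Or.inl ⟨by linarith, h, by linarith, by linarith⟩
    · exact Or.inr ⟨by linarith, by linarith, by linarith, by linarith⟩
  · by_cases h : r 1 ≤ 0
    · exact Or.inr ⟨by linarith, by linarith, by linarith, h⟩
    · exact Or.inl ⟨by linarith, by linarith, by linarith, by linarith⟩
  · exact Or.inr ⟨by linarith, by linarith, by linarith, by linarith⟩

/-- The shared corner. -/
def cornerPt (L : ℝ) : Fin 2 → ℝ := ![L, 0]

lemma corner_mem_SqA (hL : 0 < L) : cornerPt L ∈ SqA L :=
  ⟨hL.le, le_refl _, le_refl _, hL.le⟩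

lemma SqJ_reach_corner (hL : 0 < L) {p : Fin 2 → ℝ} (hp : p ∈ SqJ L) :
    Relation.ReflTransGen (fun a b => b ∈ SqJ L ∧ (a ≤ b ∨ b ≤ a)) p (cornerPt L) := by
  rcases hp with ⟨a1, a2, a3, a4⟩ | ⟨a1, a2, a3, a4⟩
  · refine Relation.ReflTransGen.head (b := ![p 0, 0])
      ⟨Or.inl ⟨a1, a2, le_refl _, hL.le⟩, Or.inr ?_⟩
      (Relation.ReflTransGen.single ⟨Or.inl (corner_mem_SqA hL), Or.inl ?_⟩)
    · intro i; fin_cases i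
      · exact le_refl _
      · exact a3
    · intro i; fin_cases i
      · exact a2
      · exact le_refl _
  · refine Relation.ReflTransGen.head (b := ![L, p 1])
      ⟨Or.inr ⟨le_refl _, (by linarith : L ≤ 2*L), a3, a4⟩, Or.inr ?_⟩
      (Relation.ReflTransGen.single ⟨Or.inl (corner_mem_SqA hL), Or.inl ?_⟩)
    · intro i; fin_cases i
      · exact a1
      · exact le_refl _
    · intro i; fin_cases i
      · exact le_refl _
      · exact a4

lemma SqJ_reach_from_corner (hL : 0 < L) {q : Fin 2 → ℝ} (hq : q ∈ SqJ L) :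
    Relation.ReflTransGen (fun a b => b ∈ SqJ L ∧ (a ≤ b ∨ b ≤ a)) (cornerPt L) q := by
  rcases hq with ⟨a1, a2, a3, a4⟩ | ⟨a1, a2, a3, a4⟩
  · refine Relation.ReflTransGen.head (b := ![q 0, 0])
      ⟨Or.inl ⟨a1, a2, le_refl _, hL.le⟩, Or.inr ?_⟩
      (Relation.ReflTransGen.single ⟨Or.inl ⟨a1, a2, a3, a4⟩, Or.inl ?_⟩)
    · intro i; fin_cases i
      · exact a2
      · exact le_refl _
    · intro i; fin_cases i
      · exact le_refl _
      · exact a3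
  · refine Relation.ReflTransGen.head (b := ![L, q 1])
      ⟨Or.inr ⟨le_refl _, (by linarith : L ≤ 2*L), a3, a4⟩, Or.inr ?_⟩
      (Relation.ReflTransGen.single ⟨Or.inr ⟨a1, a2, a3, a4⟩, Or.inl ?_⟩)
    · intro i; fin_cases i
      · exact le_refl _
      · exact a4
    · intro i; fin_cases i
      · exact a1
      · exact le_refl _

lemma SqJ_connected (hL : 0 < L) : PosetConnected (SqJ L) := by
  intro p hp q hq
  exact (SqJ_reach_corner hL hp).trans (SqJ_reach_from_corner hL hq)

lemma SqA_interval : IsInterval (SqA L) := ⟨pbox_convex _ _ _ _, pbox_connected _ _ _ _⟩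
lemma SqB_interval : IsInterval (SqB L) := ⟨pbox_convex _ _ _ _, pbox_connected _ _ _ _⟩
lemma SqJ_interval (hL : 0 < L) : IsInterval (SqJ L) := ⟨SqJ_convex hL, SqJ_connected hL⟩

lemma SqA_nonempty (hL : 0 < L) : (SqA L).Nonempty :=
  ⟨(fun _ => 0), le_refl _, hL.le, le_refl _, hL.le⟩
lemma SqB_nonempty (hL : 0 < L) : (SqB L).Nonempty :=
  ⟨cornerPt L, le_refl _, (by linarith : L ≤ 2*L), (by linarith : -L ≤ (0:ℝ)), le_refl _⟩
lemma SqJ_nonempty (hL : 0 < L) : (SqJ L).Nonempty :=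
  ⟨(fun _ => 0), Or.inl ⟨le_refl _, hL.le, le_refl _, hL.le⟩⟩

end Geometry

section FlowGeometry

lemma stdOmega_apply (t : ℝ) (x : Fin 2 → ℝ) (i : Fin 2) :
    (stdFlow 2).Ω t x i = x i + t := by
  simp [stdFlow]

variable {L ε : ℝ}

/-- Naturality geometry for `f` on the `A` component. -/
lemma geomFA (hε : 0 < ε) {p q : Fin 2 → ℝ} (hpq : p ≤ q) (hp : p ∈ SqA L)
    (hq : (stdFlow 2).Ω ε q ∈ SqJ L) : q ∈ SqA L ↔ (stdFlow 2).Ω ε p ∈ SqJ L := by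
  have h0 := hpq 0; have h1 := hpq 1
  simp only [mem_SqA, mem_SqB, mem_SqJ, stdOmega_apply] at *
  obtain ⟨a1, a2, a3, a4⟩ := hp
  constructor
  · rintro ⟨b1, b2, b3, b4⟩
    rcases hq with ⟨c1, c2, c3, c4⟩ | ⟨c1, c2, c3, c4⟩
    · exact Or.inl ⟨by linarith, by linarith, by linarith, by linarith⟩
    · exfalso; linarith
  · rintro (⟨c1, c2, c3, c4⟩ | ⟨c1, c2, c3, c4⟩)
    · rcases hq with ⟨d1, d2, d3, d4⟩ | ⟨d1, d2, d3, d4⟩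
      · exact ⟨by linarith, by linarith, by linarith, by linarith⟩
      · exfalso; linarith
    · exfalso; linarith

/-- Naturality geometry for `f` on the `B` component. -/
lemma geomFB (hε : 0 < ε) {p q : Fin 2 → ℝ} (hpq : p ≤ q) (hp : p ∈ SqB L)
    (hq : (stdFlow 2).Ω ε q ∈ SqJ L) : q ∈ SqB L ↔ (stdFlow 2).Ω ε p ∈ SqJ L := by
  have h0 := hpq 0; have h1 := hpq 1
  simp only [mem_SqA, mem_SqB, mem_SqJ, stdOmega_apply] at *
  obtain ⟨a1, a2, a3, a4⟩ := hp
  constructor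
  · rintro ⟨b1, b2, b3, b4⟩
    rcases hq with ⟨c1, c2, c3, c4⟩ | ⟨c1, c2, c3, c4⟩
    · exfalso; linarith
    · exact Or.inr ⟨by linarith, by linarith, by linarith, by linarith⟩
  · rintro (⟨c1, c2, c3, c4⟩ | ⟨c1, c2, c3, c4⟩)
    · exfalso; linarith
    · rcases hq with ⟨d1, d2, d3, d4⟩ | ⟨d1, d2, d3, d4⟩
      · exfalso; linarith
      · exact ⟨by linarith, by linarith, by linarith, by linarith⟩

/-- Naturality geometry for `g` on the `A` component. -/
lemma geomGA (hε : 0 < ε) {p q : Fin 2 → ℝ} (hpq : p ≤ q) (hp : p ∈ SqJ L)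
    (hq : (stdFlow 2).Ω ε q ∈ SqA L) : q ∈ SqJ L ↔ (stdFlow 2).Ω ε p ∈ SqA L := by
  have h0 := hpq 0; have h1 := hpq 1
  simp only [mem_SqA, mem_SqB, mem_SqJ, stdOmega_apply] at *
  obtain ⟨c1, c2, c3, c4⟩ := hq
  constructor
  · rintro (⟨b1, b2, b3, b4⟩ | ⟨b1, b2, b3, b4⟩)
    · rcases hp with ⟨a1, a2, a3, a4⟩ | ⟨a1, a2, a3, a4⟩
      · exact ⟨by linarith, by linarith, by linarith, by linarith⟩
      · exfalso; linarith
    · exfalso; linarith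
  · rintro ⟨d1, d2, d3, d4⟩
    rcases hp with ⟨a1, a2, a3, a4⟩ | ⟨a1, a2, a3, a4⟩
    · exact Or.inl ⟨by linarith, by linarith, by linarith, by linarith⟩
    · exfalso; linarith

/-- Naturality geometry for `g` on the `B` component. -/
lemma geomGB (hε : 0 < ε) {p q : Fin 2 → ℝ} (hpq : p ≤ q) (hp : p ∈ SqJ L)
    (hq : (stdFlow 2).Ω ε q ∈ SqB L) : q ∈ SqJ L ↔ (stdFlow 2).Ω ε p ∈ SqB L := by
  have h0 := hpq 0; have h1 := hpq 1
  simp only [mem_SqA, mem_SqB, mem_SqJ, stdOmega_apply] at *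
  obtain ⟨c1, c2, c3, c4⟩ := hq
  constructor
  · rintro (⟨b1, b2, b3, b4⟩ | ⟨b1, b2, b3, b4⟩)
    · exfalso; linarith
    · rcases hp with ⟨a1, a2, a3, a4⟩ | ⟨a1, a2, a3, a4⟩
      · exfalso; linarith
      · exact ⟨by linarith, by linarith, by linarith, by linarith⟩
  · rintro ⟨d1, d2, d3, d4⟩
    rcases hp with ⟨a1, a2, a3, a4⟩ | ⟨a1, a2, a3, a4⟩
    · exfalso; linarith
    · exact Or.inr ⟨by linarith, by linarith, by linarith, by linarith⟩

/-- The midpoint of a surviving `A`-point is in `J`. -/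
lemma geomDiagA (hε : 0 < ε) {p : Fin 2 → ℝ} (hp : p ∈ SqA L)
    (hp2 : (stdFlow 2).Ω ε ((stdFlow 2).Ω ε p) ∈ SqA L) : (stdFlow 2).Ω ε p ∈ SqJ L := by
  simp only [mem_SqA, mem_SqB, mem_SqJ, stdOmega_apply] at *
  obtain ⟨a1, a2, a3, a4⟩ := hp; obtain ⟨b1, b2, b3, b4⟩ := hp2
  exact Or.inl ⟨by linarith, by linarith, by linarith, by linarith⟩

lemma geomDiagB (hε : 0 < ε) {p : Fin 2 → ℝ} (hp : p ∈ SqB L)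
    (hp2 : (stdFlow 2).Ω ε ((stdFlow 2).Ω ε p) ∈ SqB L) : (stdFlow 2).Ω ε p ∈ SqJ L := by
  simp only [mem_SqA, mem_SqB, mem_SqJ, stdOmega_apply] at *
  obtain ⟨a1, a2, a3, a4⟩ := hp; obtain ⟨b1, b2, b3, b4⟩ := hp2
  exact Or.inr ⟨by linarith, by linarith, by linarith, by linarith⟩

lemma geomCrossAB (hε : 0 < ε) {p : Fin 2 → ℝ} :
    ¬(p ∈ SqA L ∧ (stdFlow 2).Ω ε p ∈ SqJ L ∧ (stdFlow 2).Ω ε ((stdFlow 2).Ω ε p) ∈ SqB L) := by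
  rintro ⟨hp, -, hp2⟩
  simp only [mem_SqA, mem_SqB, stdOmega_apply] at *
  obtain ⟨a1, a2, a3, a4⟩ := hp; obtain ⟨b1, b2, b3, b4⟩ := hp2
  linarith

lemma geomCrossBA (hε : 0 < ε) {p : Fin 2 → ℝ} :
    ¬(p ∈ SqB L ∧ (stdFlow 2).Ω ε p ∈ SqJ L ∧ (stdFlow 2).Ω ε ((stdFlow 2).Ω ε p) ∈ SqA L) := by
  rintro ⟨hp, -, hp2⟩
  simp only [mem_SqA, mem_SqB, stdOmega_apply] at *
  obtain ⟨a1, a2, a3, a4⟩ := hp; obtain ⟨b1, b2, b3, b4⟩ := hp2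
  linarith

/-- The midpoint of a surviving `J`-point is in `A ∪ B`. -/
lemma geomMid (hε : 0 < ε) {p : Fin 2 → ℝ} (hp : p ∈ SqJ L)
    (hp2 : (stdFlow 2).Ω ε ((stdFlow 2).Ω ε p) ∈ SqJ L) :
    (stdFlow 2).Ω ε p ∈ SqA L ∪ SqB L := by
  have hle1 : p ≤ (stdFlow 2).Ω ε p := (stdFlow 2).self_le hε.le p
  have hle2 : (stdFlow 2).Ω ε p ≤ (stdFlow 2).Ω ε ((stdFlow 2).Ω ε p) :=
    (stdFlow 2).self_le hε.le _
  rcases hp with hA | hB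
  · rcases hp2 with hA2 | hB2
    · exact Or.inl (pbox_convex _ _ _ _ hA hA2 hle1 hle2)
    · -- p ∈ A and p+2ε ∈ B : impossible
      exfalso
      simp only [mem_SqA, mem_SqB, stdOmega_apply] at hA hB2
      obtain ⟨a1, a2, a3, a4⟩ := hA; obtain ⟨b1, b2, b3, b4⟩ := hB2
      linarith
  · rcases hp2 with hA2 | hB2
    · exfalso
      simp only [mem_SqA, mem_SqB, stdOmega_apply] at hB hA2
      obtain ⟨a1, a2, a3, a4⟩ := hB; obtain ⟨b1, b2, b3, b4⟩ := hA2
      linarith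
    · exact Or.inr (pbox_convex _ _ _ _ hB hB2 hle1 hle2)

/-- A shifted `J`-point is never at the corner overlap. -/
lemma geomCorner (hε : 0 < ε) {p : Fin 2 → ℝ} (hp : p ∈ SqJ L) :
    ¬((stdFlow 2).Ω ε p ∈ SqA L ∧ (stdFlow 2).Ω ε p ∈ SqB L) := by
  rintro ⟨hA, hB⟩
  simp only [mem_SqA, mem_SqB, mem_SqJ, stdOmega_apply] at *
  obtain ⟨a1, a2, a3, a4⟩ := hA; obtain ⟨b1, b2, b3, b4⟩ := hB
  rcases hp with ⟨c1, c2, c3, c4⟩ | ⟨c1, c2, c3, c4⟩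
  · linarith
  · linarith

end FlowGeometry


/-! ## The barcodes and the interleaving -/

section Interleaving

attribute [local instance 2000] Preorder.smallCategory

/-- Case elimination for `Fin 2`-indexed families, keeping literal indices. -/
lemma fin2_elim {M : Fin 2 → Sort*} {C : ∀ a, M a → Prop}
    (h0 : ∀ x, C 0 x) (h1 : ∀ x, C 1 x) : ∀ a x, C a x := fun a =>
  Fin.cases h0
    (fun i => Fin.cases (motive := fun i : Fin 1 => ∀ x, C i.succ x) h1 (fun j => j.elim0) i) a

/-- Case elimination for `Fin 1`-indexed families, keeping literal indices. -/
lemma fin1_elim {M : Fin 1 → Sort*} {C : ∀ a, M a → Prop}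
    (h0 : ∀ x, C 0 x) : ∀ a x, C a x := fun a =>
  Fin.cases h0 (fun j => j.elim0) a

variable (K : Type) [Field K]

/-- Barcode with the two squares. -/
noncomputable def DMbar (L : ℝ) (hL : 0 < L) : Barcode (Fin 2 → ℝ) where
  ι := Fin 2
  B := ![SqA L, SqB L]
  interval a := by
    fin_cases a
    · exact SqA_interval
    · exact SqB_interval
  nonempty a := by
    fin_cases a
    · exact SqA_nonempty hL
    · exact SqB_nonempty hL

/-- Barcode with the corner-union of the two squares. -/
noncomputable def DNbar (L : ℝ) (hL : 0 < L) : Barcode (Fin 2 → ℝ) where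
  ι := Fin 1
  B := fun _ => SqJ L
  interval _ := SqJ_interval hL
  nonempty _ := SqJ_nonempty hL

variable {L ε : ℝ}

/-- Component of the interleaving morphism `f : ⊕ C(Sq) → C(J)(ε)`. -/
noncomputable def fApp (hL : 0 < L) (ε : ℝ) (p : Fin 2 → ℝ) :
    (Π₀ a : Fin 2, ↥(charSub K ((DMbar L hL).B a) p)) →ₗ[K]
      (Π₀ b : Fin 1, ↥(charSub K ((DNbar L hL).B b) ((stdFlow 2).Ω ε p))) :=
  (DFinsupp.lsingle (0 : Fin 1)).comp
    ((cmap K ((DMbar L hL).B ((0 : Fin 2))) ((DNbar L hL).B ((0 : Fin 1))) p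
          ((stdFlow 2).Ω ε p)).comp (DFinsupp.lapply (0 : Fin 2))
      + (cmap K ((DMbar L hL).B ((1 : Fin 2))) ((DNbar L hL).B ((0 : Fin 1))) p
          ((stdFlow 2).Ω ε p)).comp (DFinsupp.lapply (1 : Fin 2)))

/-- Component of the interleaving morphism `g : C(J) → (⊕ C(Sq))(ε)`. -/
noncomputable def gApp (hL : 0 < L) (ε : ℝ) (p : Fin 2 → ℝ) :
    (Π₀ b : Fin 1, ↥(charSub K ((DNbar L hL).B b) p)) →ₗ[K]
      (Π₀ a : Fin 2, ↥(charSub K ((DMbar L hL).B a) ((stdFlow 2).Ω ε p))) :=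
  ((DFinsupp.lsingle (0 : Fin 2)).comp
      ((cmap K ((DNbar L hL).B ((0 : Fin 1))) ((DMbar L hL).B ((0 : Fin 2))) p
        ((stdFlow 2).Ω ε p)).comp (DFinsupp.lapply (0 : Fin 1)))
    + (DFinsupp.lsingle (1 : Fin 2)).comp
      ((cmap K ((DNbar L hL).B ((0 : Fin 1))) ((DMbar L hL).B ((1 : Fin 2))) p
        ((stdFlow 2).Ω ε p)).comp (DFinsupp.lapply (0 : Fin 1))))

lemma fApp_single0 (hL : 0 < L) (p : Fin 2 → ℝ)
    (x : ↥(charSub K ((DMbar L hL).B ((0 : Fin 2))) p)) :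
    fApp K hL ε p (DFinsupp.single (0 : Fin 2) x)
      = DFinsupp.single (0 : Fin 1)
          (cmap K ((DMbar L hL).B ((0 : Fin 2))) ((DNbar L hL).B ((0 : Fin 1))) p
            ((stdFlow 2).Ω ε p) x) := by
  simp only [fApp, LinearMap.comp_apply, LinearMap.add_apply, DFinsupp.lapply_apply,
    DFinsupp.lsingle_apply, DFinsupp.single_eq_same,
    DFinsupp.single_eq_of_ne (by decide : (1 : Fin 2) ≠ 0), map_zero, add_zero]

lemma fApp_single1 (hL : 0 < L) (p : Fin 2 → ℝ)
    (x : ↥(charSub K ((DMbar L hL).B ((1 : Fin 2))) p)) :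
    fApp K hL ε p (DFinsupp.single (1 : Fin 2) x)
      = DFinsupp.single (0 : Fin 1)
          (cmap K ((DMbar L hL).B ((1 : Fin 2))) ((DNbar L hL).B ((0 : Fin 1))) p
            ((stdFlow 2).Ω ε p) x) := by
  simp only [fApp, LinearMap.comp_apply, LinearMap.add_apply, DFinsupp.lapply_apply,
    DFinsupp.lsingle_apply, DFinsupp.single_eq_same,
    DFinsupp.single_eq_of_ne (by decide : (0 : Fin 2) ≠ 1), map_zero, zero_add]

lemma gApp_single (hL : 0 < L) (p : Fin 2 → ℝ)
    (x : ↥(charSub K ((DNbar L hL).B ((0 : Fin 1))) p)) :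
    gApp K hL ε p (DFinsupp.single (0 : Fin 1) x)
      = DFinsupp.single (0 : Fin 2)
          (cmap K ((DNbar L hL).B ((0 : Fin 1))) ((DMbar L hL).B ((0 : Fin 2))) p
            ((stdFlow 2).Ω ε p) x)
        + DFinsupp.single (1 : Fin 2)
          (cmap K ((DNbar L hL).B ((0 : Fin 1))) ((DMbar L hL).B ((1 : Fin 2))) p
            ((stdFlow 2).Ω ε p) x) := by
  simp only [gApp, LinearMap.comp_apply, LinearMap.add_apply, DFinsupp.lapply_apply,
    DFinsupp.lsingle_apply, DFinsupp.single_eq_same]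


set_option maxHeartbeats 1000000

/-- Naturality equation for `f`, in `Fin`-indexed form. -/
lemma fnat_eq (hL : 0 < L) (hε : 0 < ε) (p q : Fin 2 → ℝ) (hpq : p ≤ q) :
    (fApp K hL ε q).comp
        (DFinsupp.mapRange.linearMap (fun a : Fin 2 => charMap K ((DMbar L hL).B a) p q))
      = (DFinsupp.mapRange.linearMap
            (fun b : Fin 1 => charMap K ((DNbar L hL).B b) ((stdFlow 2).Ω ε p) ((stdFlow 2).Ω ε q))).comp
          (fApp K hL ε p) := by
  refine DFinsupp.lhom_ext (fin2_elim ?_ ?_) <;> intro x <;>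
    rw [LinearMap.comp_apply, LinearMap.comp_apply, DFinsupp.mapRange.linearMap_apply,
      DFinsupp.mapRange_single]
  · rw [fApp_single0, fApp_single0, DFinsupp.mapRange.linearMap_apply, DFinsupp.mapRange_single]
    have e0 : cmap K ((DMbar L hL).B ((0 : Fin 2))) ((DNbar L hL).B ((0 : Fin 1))) q ((stdFlow 2).Ω ε q) (charMap K ((DMbar L hL).B ((0 : Fin 2))) p q x)
        = charMap K ((DNbar L hL).B ((0 : Fin 1))) ((stdFlow 2).Ω ε p) ((stdFlow 2).Ω ε q) (cmap K ((DMbar L hL).B ((0 : Fin 2))) ((DNbar L hL).B ((0 : Fin 1))) p ((stdFlow 2).Ω ε p) x) := by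
      have h2 := LinearMap.congr_fun (comp_eq_comp K ((DMbar L hL).B ((0 : Fin 2))) ((DMbar L hL).B ((0 : Fin 2))) ((DNbar L hL).B ((0 : Fin 1))) ((DNbar L hL).B ((0 : Fin 1)))
        p q ((stdFlow 2).Ω ε p) ((stdFlow 2).Ω ε q) (fun hp hq => geomFA hε hpq hp hq)) x
      simpa only [LinearMap.comp_apply, charMap_eq_cmap] using h2
    rw [e0]
  · rw [fApp_single1, fApp_single1, DFinsupp.mapRange.linearMap_apply, DFinsupp.mapRange_single]
    have e1 : cmap K ((DMbar L hL).B ((1 : Fin 2))) ((DNbar L hL).B ((0 : Fin 1))) q ((stdFlow 2).Ω ε q) (charMap K ((DMbar L hL).B ((1 : Fin 2))) p q x)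
        = charMap K ((DNbar L hL).B ((0 : Fin 1))) ((stdFlow 2).Ω ε p) ((stdFlow 2).Ω ε q) (cmap K ((DMbar L hL).B ((1 : Fin 2))) ((DNbar L hL).B ((0 : Fin 1))) p ((stdFlow 2).Ω ε p) x) := by
      have h2 := LinearMap.congr_fun (comp_eq_comp K ((DMbar L hL).B ((1 : Fin 2))) ((DMbar L hL).B ((1 : Fin 2))) ((DNbar L hL).B ((0 : Fin 1))) ((DNbar L hL).B ((0 : Fin 1)))
        p q ((stdFlow 2).Ω ε p) ((stdFlow 2).Ω ε q) (fun hp hq => geomFB hε hpq hp hq)) x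
      simpa only [LinearMap.comp_apply, charMap_eq_cmap] using h2
    rw [e1]

/-- Naturality equation for `g`, in `Fin`-indexed form. -/
lemma gnat_eq (hL : 0 < L) (hε : 0 < ε) (p q : Fin 2 → ℝ) (hpq : p ≤ q) :
    (gApp K hL ε q).comp
        (DFinsupp.mapRange.linearMap (fun b : Fin 1 => charMap K ((DNbar L hL).B b) p q))
      = (DFinsupp.mapRange.linearMap
            (fun a : Fin 2 => charMap K ((DMbar L hL).B a) ((stdFlow 2).Ω ε p) ((stdFlow 2).Ω ε q))).comp
          (gApp K hL ε p) := by
  refine DFinsupp.lhom_ext (fin1_elim ?_)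
  intro x
  rw [LinearMap.comp_apply, LinearMap.comp_apply, DFinsupp.mapRange.linearMap_apply,
    DFinsupp.mapRange_single, gApp_single, gApp_single, map_add,
    DFinsupp.mapRange.linearMap_apply, DFinsupp.mapRange_single,
    DFinsupp.mapRange.linearMap_apply, DFinsupp.mapRange_single]
  have e0 : cmap K ((DNbar L hL).B ((0 : Fin 1))) ((DMbar L hL).B ((0 : Fin 2))) q ((stdFlow 2).Ω ε q) (charMap K ((DNbar L hL).B ((0 : Fin 1))) p q x)
      = charMap K ((DMbar L hL).B ((0 : Fin 2))) ((stdFlow 2).Ω ε p) ((stdFlow 2).Ω ε q) (cmap K ((DNbar L hL).B ((0 : Fin 1))) ((DMbar L hL).B ((0 : Fin 2))) p ((stdFlow 2).Ω ε p) x) := by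
    have h2 := LinearMap.congr_fun (comp_eq_comp K ((DNbar L hL).B ((0 : Fin 1))) ((DNbar L hL).B ((0 : Fin 1))) ((DMbar L hL).B ((0 : Fin 2))) ((DMbar L hL).B ((0 : Fin 2)))
      p q ((stdFlow 2).Ω ε p) ((stdFlow 2).Ω ε q) (fun hp hq => geomGA hε hpq hp hq)) x
    simpa only [LinearMap.comp_apply, charMap_eq_cmap] using h2
  have e1 : cmap K ((DNbar L hL).B ((0 : Fin 1))) ((DMbar L hL).B ((1 : Fin 2))) q ((stdFlow 2).Ω ε q) (charMap K ((DNbar L hL).B ((0 : Fin 1))) p q x)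
      = charMap K ((DMbar L hL).B ((1 : Fin 2))) ((stdFlow 2).Ω ε p) ((stdFlow 2).Ω ε q) (cmap K ((DNbar L hL).B ((0 : Fin 1))) ((DMbar L hL).B ((1 : Fin 2))) p ((stdFlow 2).Ω ε p) x) := by
    have h2 := LinearMap.congr_fun (comp_eq_comp K ((DNbar L hL).B ((0 : Fin 1))) ((DNbar L hL).B ((0 : Fin 1))) ((DMbar L hL).B ((1 : Fin 2))) ((DMbar L hL).B ((1 : Fin 2)))
      p q ((stdFlow 2).Ω ε p) ((stdFlow 2).Ω ε q) (fun hp hq => geomGB hε hpq hp hq)) x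
    simpa only [LinearMap.comp_apply, charMap_eq_cmap] using h2
  rw [e0, e1]

/-- The first interleaving equation, in `Fin`-indexed form. -/
lemma comp_gf (hL : 0 < L) (hε : 0 < ε) (p : Fin 2 → ℝ) :
    (gApp K hL ε ((stdFlow 2).Ω ε p)).comp (fApp K hL ε p)
      = DFinsupp.mapRange.linearMap
          (fun a : Fin 2 => charMap K ((DMbar L hL).B a) p ((stdFlow 2).Ω ε ((stdFlow 2).Ω ε p))) := by
  refine DFinsupp.lhom_ext (fin2_elim ?_ ?_) <;> intro x <;>
    rw [LinearMap.comp_apply]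
  · rw [fApp_single0, gApp_single, DFinsupp.mapRange.linearMap_apply,
      DFinsupp.mapRange_single]
    have ed : cmap K ((DNbar L hL).B ((0 : Fin 1))) ((DMbar L hL).B ((0 : Fin 2))) ((stdFlow 2).Ω ε p) ((stdFlow 2).Ω ε ((stdFlow 2).Ω ε p)) (cmap K ((DMbar L hL).B ((0 : Fin 2))) ((DNbar L hL).B ((0 : Fin 1))) p ((stdFlow 2).Ω ε p) x)
        = charMap K ((DMbar L hL).B ((0 : Fin 2))) p ((stdFlow 2).Ω ε ((stdFlow 2).Ω ε p)) x := by
      have h2 := LinearMap.congr_fun (comp_eq_cmap K ((DMbar L hL).B ((0 : Fin 2))) ((DNbar L hL).B ((0 : Fin 1))) ((DMbar L hL).B ((0 : Fin 2))) p ((stdFlow 2).Ω ε p) ((stdFlow 2).Ω ε ((stdFlow 2).Ω ε p))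
        (fun h1 h3 => geomDiagA hε h1 h3)) x
      simpa only [LinearMap.comp_apply, charMap_eq_cmap] using h2
    have hz : cmap K ((DNbar L hL).B ((0 : Fin 1))) ((DMbar L hL).B ((1 : Fin 2))) ((stdFlow 2).Ω ε p) ((stdFlow 2).Ω ε ((stdFlow 2).Ω ε p)) (cmap K ((DMbar L hL).B ((0 : Fin 2))) ((DNbar L hL).B ((0 : Fin 1))) p ((stdFlow 2).Ω ε p) x) = 0 := by
      have h2 := LinearMap.congr_fun (comp_eq_zero K ((DMbar L hL).B ((0 : Fin 2))) ((DNbar L hL).B ((0 : Fin 1))) ((DMbar L hL).B ((1 : Fin 2))) p ((stdFlow 2).Ω ε p) ((stdFlow 2).Ω ε ((stdFlow 2).Ω ε p))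
        (fun hc => geomCrossAB hε hc)) x
      simpa only [LinearMap.comp_apply, LinearMap.zero_apply] using h2
    rw [ed, hz, DFinsupp.single_zero, add_zero]
  · rw [fApp_single1, gApp_single, DFinsupp.mapRange.linearMap_apply,
      DFinsupp.mapRange_single]
    have ed : cmap K ((DNbar L hL).B ((0 : Fin 1))) ((DMbar L hL).B ((1 : Fin 2))) ((stdFlow 2).Ω ε p) ((stdFlow 2).Ω ε ((stdFlow 2).Ω ε p)) (cmap K ((DMbar L hL).B ((1 : Fin 2))) ((DNbar L hL).B ((0 : Fin 1))) p ((stdFlow 2).Ω ε p) x)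
        = charMap K ((DMbar L hL).B ((1 : Fin 2))) p ((stdFlow 2).Ω ε ((stdFlow 2).Ω ε p)) x := by
      have h2 := LinearMap.congr_fun (comp_eq_cmap K ((DMbar L hL).B ((1 : Fin 2))) ((DNbar L hL).B ((0 : Fin 1))) ((DMbar L hL).B ((1 : Fin 2))) p ((stdFlow 2).Ω ε p) ((stdFlow 2).Ω ε ((stdFlow 2).Ω ε p))
        (fun h1 h3 => geomDiagB hε h1 h3)) x
      simpa only [LinearMap.comp_apply, charMap_eq_cmap] using h2
    have hz : cmap K ((DNbar L hL).B ((0 : Fin 1))) ((DMbar L hL).B ((0 : Fin 2))) ((stdFlow 2).Ω ε p) ((stdFlow 2).Ω ε ((stdFlow 2).Ω ε p)) (cmap K ((DMbar L hL).B ((1 : Fin 2))) ((DNbar L hL).B ((0 : Fin 1))) p ((stdFlow 2).Ω ε p) x) = 0 := by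
      have h2 := LinearMap.congr_fun (comp_eq_zero K ((DMbar L hL).B ((1 : Fin 2))) ((DNbar L hL).B ((0 : Fin 1))) ((DMbar L hL).B ((0 : Fin 2))) p ((stdFlow 2).Ω ε p) ((stdFlow 2).Ω ε ((stdFlow 2).Ω ε p))
        (fun hc => geomCrossBA hε hc)) x
      simpa only [LinearMap.comp_apply, LinearMap.zero_apply] using h2
    rw [ed, hz, DFinsupp.single_zero, zero_add]

/-- The second interleaving equation, in `Fin`-indexed form. -/
lemma comp_fg (hL : 0 < L) (hε : 0 < ε) (p : Fin 2 → ℝ) :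
    (fApp K hL ε ((stdFlow 2).Ω ε p)).comp (gApp K hL ε p)
      = DFinsupp.mapRange.linearMap
          (fun b : Fin 1 => charMap K ((DNbar L hL).B b) p ((stdFlow 2).Ω ε ((stdFlow 2).Ω ε p))) := by
  refine DFinsupp.lhom_ext (fin1_elim ?_)
  intro x
  rw [LinearMap.comp_apply, gApp_single, map_add, fApp_single0, fApp_single1,
    DFinsupp.mapRange.linearMap_apply, DFinsupp.mapRange_single, ← DFinsupp.single_add]
  refine congrArg _ ?_
  have h2 := LinearMap.congr_fun (comp_add_comp K ((DNbar L hL).B ((0 : Fin 1))) ((DMbar L hL).B ((0 : Fin 2))) ((DMbar L hL).B ((1 : Fin 2))) p ((stdFlow 2).Ω ε p) ((stdFlow 2).Ω ε ((stdFlow 2).Ω ε p))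
    (fun h1a h2a => geomMid hε h1a h2a) (fun h1a => geomCorner hε h1a)) x
  simpa only [LinearMap.comp_apply, LinearMap.add_apply, charMap_eq_cmap] using h2

/-- The interleaving morphism `f`. -/
noncomputable def fNat (hL : 0 < L) (hε : 0 < ε) :
    bcMod K (DMbar L hL) ⟶ Pshift K (stdFlow 2) ε (bcMod K (DNbar L hL)) where
  app p := ModuleCat.ofHom (fApp K hL ε p)
  naturality {p q} h := ModuleCat.hom_ext (fnat_eq K hL hε p q (leOfHom h))

/-- The interleaving morphism `g`. -/
noncomputable def gNat (hL : 0 < L) (hε : 0 < ε) :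
    bcMod K (DNbar L hL) ⟶ Pshift K (stdFlow 2) ε (bcMod K (DMbar L hL)) where
  app p := ModuleCat.ofHom (gApp K hL ε p)
  naturality {p q} h := ModuleCat.hom_ext (gnat_eq K hL hε p q (leOfHom h))

/-- The main interleaving result. -/
lemma interleaved_main (hL : 0 < L) (hε : 0 < ε) (hε' : 0 ≤ ε) :
    Interleaved K (stdFlow 2) hε' (bcMod K (DMbar L hL)) (bcMod K (DNbar L hL)) :=
  ⟨fNat K hL hε, gNat K hL hε, fun p => ModuleCat.hom_ext (comp_gf K hL hε p), fun p => ModuleCat.hom_ext (comp_fg K hL hε p)⟩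

lemma dI_le_one (hL : 0 < L) :
    dI K (stdFlow 2) (bcMod K (DMbar L hL)) (bcMod K (DNbar L hL)) ≤ 1 := by
  have h : Interleaved K (stdFlow 2) (1 : ℝ≥0).coe_nonneg
      (bcMod K (DMbar L hL)) (bcMod K (DNbar L hL)) :=
    interleaved_main K hL (by norm_num) _
  refine le_trans (iInf₂_le (1 : ℝ≥0) h) (by simp)

end Interleaving

/-! ## The Hausdorff lower bound -/

section Hausdorff

attribute [local instance 2000] Preorder.smallCategory

variable (K : Type) [Field K] {L ε : ℝ}

/-- The unit of a nonzero characteristic stalk. -/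
noncomputable def charOne (I : Set (Fin 2 → ℝ)) (p : Fin 2 → ℝ) (hp : p ∈ I) :
    ↥(charSub K I p) :=
  ⟨1, by rw [charSub_eq_top K hp]; exact Submodule.mem_top⟩

lemma charMap_charOne (I : Set (Fin 2 → ℝ)) {p q : Fin 2 → ℝ} (hp : p ∈ I) (hq : q ∈ I) :
    ((charMap K I p q (charOne K I p hp) : ↥(charSub K I q)) : K) = 1 := by
  rw [charMap_eq_cmap, cmap_val, if_pos ⟨hp, hq⟩]
  rfl

/-- If some transition of `C(J')` survives but its `ε`-midpoint misses `I'`, then `C(I')` and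
`C(J')` are not `ε`-interleaved. -/
lemma not_interleaved (hε : 0 ≤ ε) (I' J' : Set (Fin 2 → ℝ)) (hI : PosetConvex I')
    (hJ : PosetConvex J') (q : Fin 2 → ℝ) (hq : q ∈ J')
    (hq2 : (stdFlow 2).Ω ε ((stdFlow 2).Ω ε q) ∈ J') (hmid : (stdFlow 2).Ω ε q ∉ I') :
    ¬ Interleaved K (stdFlow 2) hε (charMod K I' hI) (charMod K J' hJ) := by
  rintro ⟨f, g, -, hgf⟩
  have h := hgf q
  have hz : g.app q (charOne K J' q hq) = 0 := charElt_eq_zero K hmid _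
  have happ : f.app ((stdFlow 2).Ω ε q) (g.app q (charOne K J' q hq))
      = charMap K J' q ((stdFlow 2).Ω ε ((stdFlow 2).Ω ε q)) (charOne K J' q hq) := by
    have h2 : (g.app q ≫ f.app ((stdFlow 2).Ω ε q)) (charOne K J' q hq)
        = charMap K J' q ((stdFlow 2).Ω ε ((stdFlow 2).Ω ε q)) (charOne K J' q hq) := by
      rw [h]; rfl
    exact h2
  rw [hz] at happ
  erw [map_zero] at happ
  have hval : ((charMap K J' q ((stdFlow 2).Ω ε ((stdFlow 2).Ω ε q)) (charOne K J' q hq) :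
      ↥(charSub K J' ((stdFlow 2).Ω ε ((stdFlow 2).Ω ε q)))) : K) = 0 := by
    rw [← happ]; rfl
  rw [charMap_charOne K J' hq hq2] at hval
  exact one_ne_zero hval

/-- `C(J')` is not `ε`-interleaved with the zero module either. -/
lemma not_interleaved_zero (hε : 0 ≤ ε) (J' : Set (Fin 2 → ℝ)) (hJ : PosetConvex J')
    (q : Fin 2 → ℝ) (hq : q ∈ J')
    (hq2 : (stdFlow 2).Ω ε ((stdFlow 2).Ω ε q) ∈ J') :
    ¬ Interleaved K (stdFlow 2) hε (zeroPMod K) (charMod K J' hJ) := by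
  rintro ⟨f, g, -, hgf⟩
  have h := hgf q
  have hz : g.app q (charOne K J' q hq) = 0 := charElt_eq_zero K (Set.notMem_empty _) _
  have happ : f.app ((stdFlow 2).Ω ε q) (g.app q (charOne K J' q hq))
      = charMap K J' q ((stdFlow 2).Ω ε ((stdFlow 2).Ω ε q)) (charOne K J' q hq) := by
    have h2 : (g.app q ≫ f.app ((stdFlow 2).Ω ε q)) (charOne K J' q hq)
        = charMap K J' q ((stdFlow 2).Ω ε ((stdFlow 2).Ω ε q)) (charOne K J' q hq) := by
      rw [h]; rfl
    exact h2
  rw [hz] at happ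
  erw [map_zero] at happ
  have hval : ((charMap K J' q ((stdFlow 2).Ω ε ((stdFlow 2).Ω ε q)) (charOne K J' q hq) :
      ↥(charSub K J' ((stdFlow 2).Ω ε ((stdFlow 2).Ω ε q)))) : K) = 0 := by
    rw [← happ]; rfl
  rw [charMap_charOne K J' hq hq2] at hval
  exact one_ne_zero hval

/-- No `ε`-correspondence exists between the barcodes for `ε < c` with `L = 2c+2`. -/
lemma corr_bound {c : ℝ} (hc : 0 < c) (hL : 0 < 2*c+2) (ε : ℝ≥0)
    (hσ : ∃ σ : Set ((DMbar (2*c+2) hL).ι × (DNbar (2*c+2) hL).ι),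
      IsCorrespondence K (stdFlow 2) ε.coe_nonneg (DMbar (2*c+2) hL) (DNbar (2*c+2) hL) σ) :
    c ≤ (ε : ℝ) := by
  by_contra hlt
  push_neg at hlt
  obtain ⟨σ, hcor, hunA, hunB⟩ := hσ
  have hε0 : (0:ℝ) ≤ (ε:ℝ) := ε.coe_nonneg
  -- the two candidate witness points
  have hcornerB : (![2*c+2, -(2*c+2)] : Fin 2 → ℝ) ∈ SqB (2*c+2) :=
    ⟨le_refl _, (by linarith : (2*c+2:ℝ) ≤ 2*(2*c+2)), le_refl _,
      (by linarith : -(2*c+2) ≤ (0:ℝ))⟩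
  have hcB0 : ∀ t : ℝ, (stdFlow 2).Ω t (![2*c+2, -(2*c+2)] : Fin 2 → ℝ) 0 = 2*c+2 + t := by
    intro t; rw [stdOmega_apply]; norm_num
  have hcB1 : ∀ t : ℝ, (stdFlow 2).Ω t (![2*c+2, -(2*c+2)] : Fin 2 → ℝ) 1 = -(2*c+2) + t := by
    intro t; rw [stdOmega_apply]; norm_num
  have hcornerB2 : (stdFlow 2).Ω (ε:ℝ) ((stdFlow 2).Ω (ε:ℝ)
      (![2*c+2, -(2*c+2)] : Fin 2 → ℝ)) ∈ SqB (2*c+2) := by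
    refine ⟨?_, ?_, ?_, ?_⟩ <;> rw [stdOmega_apply] <;>
      first
        | (rw [hcB0]; linarith)
        | (rw [hcB1]; linarith)
  have horig : (fun _ => 0 : Fin 2 → ℝ) ∈ SqA (2*c+2) := ⟨le_refl _, hL.le, le_refl _, hL.le⟩
  have horig2 : (stdFlow 2).Ω (ε:ℝ) ((stdFlow 2).Ω (ε:ℝ)
      (fun _ => 0 : Fin 2 → ℝ)) ∈ SqA (2*c+2) := by
    have e0 : ∀ i, ((stdFlow 2).Ω (ε:ℝ) ((stdFlow 2).Ω (ε:ℝ) (fun _ => 0 : Fin 2 → ℝ))) i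
        = (ε:ℝ) + (ε:ℝ) := by
      intro i; rw [stdOmega_apply, stdOmega_apply]; norm_num
    exact ⟨by rw [e0]; linarith, by rw [e0]; linarith, by rw [e0]; linarith,
      by rw [e0]; linarith⟩
  by_cases hex : ∃ ab, ab ∈ σ
  · obtain ⟨⟨a, b⟩, hab⟩ := hex
    have hint := hcor (a, b) hab
    revert hint
    refine fin2_elim (M := fun _ => Unit) (C := fun a _ =>
      ¬ Interleaved K (stdFlow 2) ε.coe_nonneg
        (charMod K ((DMbar (2*c+2) hL).B a) ((DMbar (2*c+2) hL).interval a).1)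
        (charMod K ((DNbar (2*c+2) hL).B b) ((DNbar (2*c+2) hL).interval b).1)) ?_ ?_ a ⟨⟩
    · intro _
      refine not_interleaved K ε.coe_nonneg _ _ _ _ (![2*c+2, -(2*c+2)]) (Or.inr hcornerB)
        (Or.inr hcornerB2) ?_
      rintro ⟨h1, h2, h3, h4⟩
      rw [hcB1] at h3
      linarith
    · intro _
      refine not_interleaved K ε.coe_nonneg _ _ _ _ (fun _ => 0) (Or.inl horig)
        (Or.inl horig2) ?_
      rintro ⟨h1, h2, h3, h4⟩
      rw [stdOmega_apply] at h1
      norm_num at h1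
      linarith
  · push_neg at hex
    have h := hunB (0 : Fin 1) (fun a => hex (a, (0 : Fin 1)))
    exact not_interleaved_zero K ε.coe_nonneg _ _ (fun _ => 0) (Or.inl horig)
      (Or.inl horig2) h

lemma dH_ge {c : ℝ} (hc : 0 < c) (hL : 0 < 2*c+2) :
    ENNReal.ofReal c ≤ dH K (stdFlow 2) (DMbar (2*c+2) hL) (DNbar (2*c+2) hL) := by
  refine le_iInf₂ fun ε hσ => ?_
  have h := corr_bound K hc hL ε hσ
  calc ENNReal.ofReal c ≤ ENNReal.ofReal (ε : ℝ) := ENNReal.ofReal_le_ofReal h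
    _ = (ε : ℝ≥0∞) := ENNReal.ofReal_coe_nnreal

end Hausdorff

/-- instability of the Hausdorff distance with respect to the
interleaving distance for interval-decomposable `ℝ²`-modules. -/
theorem hausdorff_instability (c : ℝ) (hc : 0 < c) :
    ∃ DM DN : Barcode (Fin 2 → ℝ),
      Nonempty (DM.ι ≃ Fin 2) ∧ Nonempty (DN.ι ≃ Fin 1) ∧
      dI K (stdFlow 2) (bcMod K DM) (bcMod K DN) ≤ 1 ∧
      ENNReal.ofReal c ≤ dH K (stdFlow 2) DM DN := by
  have hL : 0 < 2*c+2 := by linarith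
  exact ⟨DMbar (2*c+2) hL, DNbar (2*c+2) hL, ⟨Equiv.refl _⟩, ⟨Equiv.refl _⟩,
    dI_le_one K hL, dH_ge K hc hL⟩
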